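/- Substituting q = −1 into E_{k,n}(q) = q^{n−k²} ∑_{i=0}^{k−1} (−1)^i [k−i]^n q^{ki−k} (C(n,i) q^{k−i} + C(n,i−1)) yields ± C(n−1, k−1), where [m] = 1 + q + ... + q^{m−1}. -/

import Mathlib

open Finset

private lemma zpow_neg_one_sub (a b : ℕ) :
    (-1 : ℚ) ^ ((a : ℤ) - (b : ℤ)) = (-1 : ℚ) ^ a * (-1 : ℚ) ^ b := by
  rw [sub_eq_add_neg, zpow_add₀ (by norm_num : (-1:ℚ) ≠ 0), zpow_natCast, zpow_neg,
    zpow_natCast, ← inv_pow]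
  norm_num

private lemma sum_B (n : ℕ) (hn : 1 ≤ n) :
    ∀ k, 1 ≤ k →
      ∑ i ∈ Finset.range k,
        (if Even (k - i) then (0:ℚ)
          else ((n.choose i : ℚ) - if i = 0 then 0 else ((n.choose (i-1) : ℕ) : ℚ)))
        = ((n - 1).choose (k - 1) : ℚ) := by
  intro k
  induction k using Nat.strong_induction_on with
  | _ k ih =>
    match k with
    | 0 => intro h; omega
    | 1 =>
      intro _
      simp
    | 2 =>
      intro _
      obtain ⟨p, rfl⟩ := Nat.exists_eq_add_of_le hn
      rw [Finset.sum_range_succ, Finset.sum_range_one]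
      norm_num [Nat.choose_one_right]
    | (m+3) =>
      intro _
      rw [Finset.sum_range_succ, Finset.sum_range_succ]
      have h1 : ¬ Even (m + 3 - (m+2)) := by simp
      have h2 : Even (m + 3 - (m+1)) := by
        have : m + 3 - (m+1) = 2 := by omega
        simp [this]
      rw [if_neg h1, if_pos h2]
      have hsum : ∀ i ∈ Finset.range (m+1),
          (if Even (m + 3 - i) then (0:ℚ)
            else ((n.choose i : ℚ) - if i = 0 then 0 else ((n.choose (i-1) : ℕ) : ℚ)))
          = (if Even (m + 1 - i) then (0:ℚ)
            else ((n.choose i : ℚ) - if i = 0 then 0 else ((n.choose (i-1) : ℕ) : ℚ))) := by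
        intro i hi
        rw [Finset.mem_range] at hi
        have : m + 3 - i = (m + 1 - i) + 2 := by omega
        rw [this]
        simp [Nat.even_add]
      rw [Finset.sum_congr rfl hsum, ih (m+1) (by omega) (by omega)]
      obtain ⟨p, rfl⟩ := Nat.exists_eq_add_of_le hn
      have e2 : m + 2 ≠ 0 := by omega
      rw [if_neg e2]
      simp only [Nat.add_sub_cancel, Nat.add_sub_cancel_left]
      have p1 : (p+1).choose (m+2) = p.choose (m+1) + p.choose (m+2) := Nat.choose_succ_succ' p (m+1)
      have p2 : (p+1).choose (m+1) = p.choose m + p.choose (m+1) := Nat.choose_succ_succ' p m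
      have q1 : (((1 + p).choose (m + 2) : ℕ) : ℚ) = (p.choose (m+1) : ℚ) + (p.choose (m+2) : ℚ) := by
        rw [show 1 + p = p + 1 from by omega, p1]; push_cast; ring
      have q2 : (((1 + p).choose (m + 2 - 1) : ℕ) : ℚ) = (p.choose m : ℚ) + (p.choose (m+1) : ℚ) := by
        rw [show 1 + p = p + 1 from by omega, show m + 2 - 1 = m + 1 from rfl, p2]; push_cast; ring
      rw [q1, q2, show m + 3 - 1 = m + 2 from rfl]
      ring

theorem E_kn_at_neg_one (n k : ℕ) (hk : 1 ≤ k) (hkn : k ≤ n) :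
    (-1 : ℚ) ^ ((n : ℤ) - (k : ℤ) ^ 2) *
        ∑ i ∈ Finset.range k,
          (-1 : ℚ) ^ i * (∑ t ∈ Finset.range (k - i), (-1 : ℚ) ^ t) ^ n *
            (-1 : ℚ) ^ ((k : ℤ) * i - k) *
            ((n.choose i : ℚ) * (-1 : ℚ) ^ ((k : ℤ) - i) +
              (if i = 0 then 0 else ((n.choose (i - 1) : ℕ) : ℚ))) =
      ((n - 1).choose (k - 1) : ℚ) ∨
    (-1 : ℚ) ^ ((n : ℤ) - (k : ℤ) ^ 2) *
        ∑ i ∈ Finset.range k,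
          (-1 : ℚ) ^ i * (∑ t ∈ Finset.range (k - i), (-1 : ℚ) ^ t) ^ n *
            (-1 : ℚ) ^ ((k : ℤ) * i - k) *
            ((n.choose i : ℚ) * (-1 : ℚ) ^ ((k : ℤ) - i) +
              (if i = 0 then 0 else ((n.choose (i - 1) : ℕ) : ℚ))) =
      -((n - 1).choose (k - 1) : ℚ) := by
  have hn : 1 ≤ n := le_trans hk hkn
  have hS : ∑ i ∈ Finset.range k,
          (-1 : ℚ) ^ i * (∑ t ∈ Finset.range (k - i), (-1 : ℚ) ^ t) ^ n *
            (-1 : ℚ) ^ ((k : ℤ) * i - k) *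
            ((n.choose i : ℚ) * (-1 : ℚ) ^ ((k : ℤ) - i) +
              (if i = 0 then 0 else ((n.choose (i - 1) : ℕ) : ℚ)))
        = ((n - 1).choose (k - 1) : ℚ) := by
    rw [← sum_B n hn k hk]
    apply Finset.sum_congr rfl
    intro i hi
    rw [Finset.mem_range] at hi
    have hki : ((k : ℤ) * i - k) = (((k*i : ℕ) : ℤ) - ((k : ℕ) : ℤ)) := by push_cast; ring
    rw [hki, zpow_neg_one_sub, zpow_neg_one_sub, neg_one_geom_sum]
    by_cases hp : Even (k - i)
    · rw [if_pos hp, if_pos hp]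
      rw [zero_pow (by omega : n ≠ 0)]
      ring
    · rw [if_neg hp, if_neg hp, one_pow]
      have hodd : Odd (k + i) := by
        have h1 : Odd (k - i) := Nat.not_even_iff_odd.mp hp
        have h2 : k + i = (k - i) + 2 * i := by omega
        rw [h2]
        exact h1.add_even (even_two_mul i)
      rcases Nat.even_or_odd k with hke | hko <;> rcases Nat.even_or_odd i with hie | hio
      · exact absurd (hke.add hie) (Nat.not_even_iff_odd.mpr hodd)
      · rw [hke.neg_one_pow, hio.neg_one_pow, (hke.mul_right i).neg_one_pow]
        ring
      · rw [hko.neg_one_pow, hie.neg_one_pow, (hie.mul_left k).neg_one_pow]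
        ring
      · exact absurd (hko.add_odd hio) (Nat.not_even_iff_odd.mpr hodd)
  have hpre : (-1 : ℚ) ^ ((n : ℤ) - (k : ℤ) ^ 2) = (-1 : ℚ) ^ (n + k^2) := by
    have h : ((k : ℤ))^2 = ((k^2 : ℕ) : ℤ) := by push_cast; ring
    rw [h, zpow_neg_one_sub, ← pow_add]
  rw [hS, hpre]
  rcases Nat.even_or_odd (n + k^2) with he | ho
  · left; rw [he.neg_one_pow, one_mul]
  · right; rw [ho.neg_one_pow]; ring
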